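/- Let A be a group with subgroups N ≤ C where N is normal in A. Then the HNN extension A*_C = ⟨A, s | s⁻¹cs = c for all c ∈ C⟩ embeds in the direct product D' = ((A/N)*_{C/N}) × A of A with the HNN extension of A/N in which a stable letter commutes with the image C/N of C; that is, there exists an injective group homomorphism from A*_C into D'. -/

import Mathlib

open HNNExtension

private lemma toSubgroup_self {G : Type*} [Group G] (C : Subgroup G) (u : ℤˣ) :
    toSubgroup C C u = C := by
  rcases Int.units_eq_one_or u with rfl | rfl <;> rfl

private lemma mk_mem_map_iff {A : Type*} [Group A] (N C : Subgroup A) [N.Normal]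
    (hNC : N ≤ C) (g : A) :
    QuotientGroup.mk' N g ∈ C.map (QuotientGroup.mk' N) ↔ g ∈ C := by
  constructor
  · rintro ⟨c, hc, hcg⟩
    rw [QuotientGroup.mk'_eq_mk'] at hcg
    rcases hcg with ⟨n, hn, rfl⟩
    exact mul_mem hc (hNC hn)
  · intro hg
    exact ⟨g, hg, rfl⟩

/-- Theorem 6: Let `A` be a group with subgroups `N ≤ C` where `N` is normal in
`A`. Then the HNN extension `A*_C = ⟨A, s | s⁻¹cs = c, ∀ c ∈ C⟩` embeds in the direct product
`D' = ((A/N)*_{C/N}) × A` of `A` with the analogous HNN extension of `A/N` along the image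
`C/N` of `C` in `A/N`. -/
theorem hnn_embeds_in_hnn_of_quotient_times_base
    (A : Type*) [Group A] (N C : Subgroup A) [N.Normal] (hNC : N ≤ C) :
    ∃ f : HNNExtension A C C (MulEquiv.refl C) →*
        (HNNExtension (A ⧸ N) (C.map (QuotientGroup.mk' N)) (C.map (QuotientGroup.mk' N))
          (MulEquiv.refl (C.map (QuotientGroup.mk' N)))) × A,
      Function.Injective f := by
  set C' := C.map (QuotientGroup.mk' N) with hC'
  -- the map to the HNN extension of the quotient
  have hφcond : ∀ c : C,
      (t : HNNExtension (A ⧸ N) C' C' (MulEquiv.refl C')) *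
        (HNNExtension.of.comp (QuotientGroup.mk' N)) (c : A) =
      (HNNExtension.of.comp (QuotientGroup.mk' N)) ((MulEquiv.refl C c : C) : A) * t := by
    intro c
    have hc : QuotientGroup.mk' N (c : A) ∈ C' := ⟨c, c.2, rfl⟩
    simpa using t_mul_of (φ := MulEquiv.refl C') ⟨_, hc⟩
  let φ : HNNExtension A C C (MulEquiv.refl C) →* HNNExtension (A ⧸ N) C' C' (MulEquiv.refl C') :=
    lift (HNNExtension.of.comp (QuotientGroup.mk' N)) t hφcond
  -- the map back to the base group, killing `t`
  have hψcond : ∀ c : C, (1 : A) * (MonoidHom.id A) (c : A) =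
      (MonoidHom.id A) ((MulEquiv.refl C c : C) : A) * 1 := by simp
  let ψ : HNNExtension A C C (MulEquiv.refl C) →* A := lift (MonoidHom.id A) 1 hψcond
  refine ⟨φ.prod ψ, ?_⟩
  rw [injective_iff_map_eq_one]
  intro g hg
  have hφg : φ g = 1 := by simpa using congrArg Prod.fst hg
  have hψg : ψ g = 1 := by simpa using congrArg Prod.snd hg
  -- express `g` as the product of a reduced word
  rcases NormalWord.TransversalPair.nonempty A C C with ⟨d⟩
  set w : NormalWord d := NormalWord.equiv (MulEquiv.refl C) d g with hwdef
  have hwprod : NormalWord.ReducedWord.prod (MulEquiv.refl C) w.toReducedWord = g :=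
    (NormalWord.equiv (MulEquiv.refl C) d).symm_apply_apply g
  -- the image reduced word in the quotient HNN extension
  have hchain : (w.toList.map (Prod.map id (QuotientGroup.mk' N))).Chain'
      (fun a b => a.2 ∈ toSubgroup C' C' a.1 → a.1 = b.1) := by
    rw [List.Chain', List.isChain_map]
    refine w.chain.imp ?_
    rintro ⟨u, a⟩ ⟨v, b⟩ h hm
    simp only [Prod.map, toSubgroup_self] at hm ⊢
    exact h (by rw [toSubgroup_self]; exact (mk_mem_map_iff N C hNC a).1 hm)
  set w' : NormalWord.ReducedWord (A ⧸ N) C' C' :=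
    { head := QuotientGroup.mk' N w.head
      toList := w.toList.map (Prod.map id (QuotientGroup.mk' N))
      chain := hchain } with hw'def
  have hφprod : w'.prod (MulEquiv.refl C') = φ g := by
    rw [← hwprod]
    simp only [hw'def, NormalWord.ReducedWord.prod, map_mul, List.map_map]
    congr 1
    rw [map_list_prod]
    congr 1
    rw [List.map_map]
    refine List.map_congr_left ?_
    rintro ⟨u, a⟩ _
    simp [φ, Prod.map, lift_of, lift_t, map_zpow]
  -- Britton's lemma: the image word is trivial, so the list is empty
  have h1 : w'.prod (MulEquiv.refl C') ∈
      (HNNExtension.of.range : Subgroup (HNNExtension (A ⧸ N) C' C' (MulEquiv.refl C'))) := by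
    rw [hφprod, hφg]
    exact one_mem _
  have hnil : w'.toList = [] := ReducedWord.toList_eq_nil_of_mem_of_range _ w' h1
  have hwnil : w.toList = [] := by
    have := congrArg List.length hnil
    simpa [hw'def] using List.eq_nil_of_length_eq_zero (by simpa [hw'def] using this)
  -- hence `g = of w.head`, and `ψ` shows `w.head = 1`
  have hg_of : g = HNNExtension.of w.head := by
    rw [← hwprod]
    simp [NormalWord.ReducedWord.prod, hwnil]
  have : ψ g = w.head := by rw [hg_of]; simp [ψ, lift_of]
  rw [hψg] at this
  rw [hg_of, ← this, map_one]
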